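/- Let ε ∈ (0, 1/400) and R > 10. Let I be a countable index set, (O_i)_{i∈I} a family of pairwise disjoint nonempty convex subsets (intervals) of [0, R], and (l_i)_{i∈I} positive real numbers with l_i ≥ λ(O_i) for every i ∈ I and ∑_{i∈I} l_i < 20·ε·R, where λ denotes Lebesgue measure. Then there exist a countable family (Q_j)_{j∈J} of pairwise disjoint open intervals of ℝ and a function f : I → J such that: (1) O_i ⊆ Q_{f(i)} for every i ∈ I; (2) λ(Q_j) = ∑_{i : f(i) = j} l_i/√ε for every j ∈ J. -/

import Mathlib

open MeasureTheory Set

lemma rising_sun {F : ℝ → ℝ} (hF : Continuous F) {c d : ℝ} (hcd : c < d)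
    (hc : ∀ y, c < y → F c ≤ F y) (hd : ∀ y, d < y → F d ≤ F y)
    (hE : ∀ z ∈ Set.Ioo c d, ∃ y, z < y ∧ F y < F z) : F c = F d := by
  have key : ∀ z ∈ Set.Ioo c d, F d ≤ F z := by
    intro z hz
    by_contra hlt
    push_neg at hlt   -- hlt : F z < F d
    set A : Set ℝ := Set.Icc z d ∩ F ⁻¹' (Set.Iic (F z)) with hA
    have hA_closed : IsClosed A := isClosed_Icc.inter (isClosed_Iic.preimage hF)
    have hA_ne : A.Nonempty := ⟨z, ⟨le_rfl, hz.2.le⟩, by simp⟩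
    have hA_bdd : BddAbove A := ⟨d, fun u hu => hu.1.2⟩
    have hA_cpt : IsCompact A :=
      (isCompact_Icc (a := z) (b := d)).of_isClosed_subset hA_closed (fun u hu => hu.1)
    have hw := hA_cpt.sSup_mem hA_ne
    set w := sSup A with hw_def
    have hwz : z ≤ w := hw.1.1
    have hwd : w ≤ d := hw.1.2
    have hFw : F w ≤ F z := hw.2
    have hwd2 : w < d := hwd.lt_of_ne (fun h => absurd (h ▸ hFw) (not_le.mpr hlt))
    obtain ⟨y, hwy, hFy⟩ := hE w ⟨lt_of_lt_of_le hz.1 hwz, hwd2⟩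
    rcases le_or_gt y d with hyd | hyd
    · have hyA : y ∈ A := ⟨⟨hwz.trans hwy.le, hyd⟩, (hFy.trans_le hFw).le⟩
      exact absurd (le_csSup hA_bdd hyA) (not_le.mpr hwy)
    · exact absurd (hd y hyd) (not_le.mpr (hFy.trans (hFw.trans_lt hlt)))
  have h1 : F c ≤ F d := hc d hcd
  have h2 : F d ≤ F c := by
    have hne : (nhdsWithin c (Set.Ioo c d)).NeBot := by
      apply mem_closure_iff_nhdsWithin_neBot.mp
      rw [closure_Ioo hcd.ne]
      exact ⟨le_rfl, hcd.le⟩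
    have htend : Filter.Tendsto F (nhdsWithin c (Set.Ioo c d)) (nhds (F c)) :=
      hF.continuousAt.tendsto.mono_left nhdsWithin_le_nhds
    exact ge_of_tendsto htend (Filter.eventually_of_mem self_mem_nhdsWithin key)
  exact le_antisymm h1 h2


/-- Covering lemma (Appendix A, Lemma A.1): a countable family of disjoint small
intervals in `[0, R]` with weights `l i ≥ λ(O i)` of total weight `< 20 ε R` can be
absorbed into pairwise disjoint open intervals `Q j`, the interval `Q j` having length
exactly `∑_{f i = j} l i / √ε`. -/
theorem interval_covering_lemma
    (ε R : ℝ) (hε : ε ∈ Set.Ioo (0 : ℝ) (1 / 400)) (hR : 10 < R)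
    (I : Type*) [Countable I]
    (O : I → Set ℝ) (l : I → ℝ)
    (hO_ne : ∀ i, (O i).Nonempty)
    (hO_conv : ∀ i, Convex ℝ (O i))
    (hO_sub : ∀ i, O i ⊆ Icc (0 : ℝ) R)
    (hO_disj : ∀ i j, i ≠ j → Disjoint (O i) (O j))
    (hl_pos : ∀ i, 0 < l i)
    (hl_ge : ∀ i, volume (O i) ≤ ENNReal.ofReal (l i))
    (hsum : ∑' i, ENNReal.ofReal (l i) < ENNReal.ofReal (20 * ε * R)) :
    ∃ (J : Type) (Q : J → Set ℝ) (f : I → J),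
      Countable J ∧
      (∀ j, ∃ a b : ℝ, a < b ∧ Q j = Ioo a b) ∧
      (∀ j j', j ≠ j' → Disjoint (Q j) (Q j')) ∧
      (∀ i, O i ⊆ Q (f i)) ∧
      (∀ j, volume (Q j)
        = ∑' i : {i : I // f i = j}, ENNReal.ofReal (l i.1 / Real.sqrt ε)) := by
  obtain ⟨hε0, hε4⟩ := hε
  have hsε : 0 < Real.sqrt ε := Real.sqrt_pos.mpr hε0
  have hsε20 : Real.sqrt ε < 1 / 20 := by
    rw [Real.sqrt_lt' (by norm_num : (0:ℝ) < 1/20)]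
    nlinarith
  have hsε1 : Real.sqrt ε < 1 := hsε20.trans (by norm_num)
  set m : I → ℝ := fun i => l i / Real.sqrt ε with hm_def
  have hm_pos : ∀ i, 0 < m i := fun i => div_pos (hl_pos i) hsε
  have hl_lt_m : ∀ i, l i < m i := by
    intro i
    rw [hm_def, lt_div_iff₀ hsε]
    nlinarith [hl_pos i]
  have h20 : (0:ℝ) < 20 * ε * R := by nlinarith
  have hl_sum : Summable l := by
    have h1 : Summable fun i => (ENNReal.ofReal (l i)).toReal :=
      ENNReal.summable_toReal (hsum.trans_le le_top).ne
    have h2 : (fun i => (ENNReal.ofReal (l i)).toReal) = l :=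
      funext fun i => ENNReal.toReal_ofReal (hl_pos i).le
    rwa [h2] at h1
  have hm_sum : Summable m := hl_sum.div_const _
  have hlsum_lt : ∑' i, l i < 20 * ε * R := by
    have h1 : ENNReal.ofReal (∑' i, l i) = ∑' i, ENNReal.ofReal (l i) :=
      ENNReal.ofReal_tsum_of_nonneg (fun i => (hl_pos i).le) hl_sum
    have h3 := hsum
    rw [← h1] at h3
    exact (ENNReal.ofReal_lt_ofReal_iff h20).mp h3
  set T := ∑' i, m i with hT_def
  have hT_eq : T = (∑' i, l i) / Real.sqrt ε := by
    rw [hT_def, hm_def]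
    exact tsum_div_const
  have hT_lt_R : T < R := by
    have h1 : T < (20 * ε * R) / Real.sqrt ε := by
      rw [hT_eq]
      gcongr
    have h2 : (20 * ε * R) / Real.sqrt ε = 20 * Real.sqrt ε * R := by
      rw [div_eq_iff hsε.ne']
      nlinarith [Real.mul_self_sqrt hε0.le]
    nlinarith [hsε20, hR]
  have hT_nonneg : 0 ≤ T := tsum_nonneg fun i => (hm_pos i).le
  have hm_le_T : ∀ i, m i ≤ T := fun i => Summable.le_tsum hm_sum i fun j _ => (hm_pos j).le
  -- endpoints of the intervals O i
  have hObdd_above : ∀ i, BddAbove (O i) := fun i => ⟨R, fun x hx => (hO_sub i hx).2⟩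
  have hObdd_below : ∀ i, BddBelow (O i) := fun i => ⟨0, fun x hx => (hO_sub i hx).1⟩
  set a : I → ℝ := fun i => sInf (O i) with ha_def
  set b : I → ℝ := fun i => sSup (O i) with hb_def
  have ha0 : ∀ i, 0 ≤ a i := fun i => le_csInf (hO_ne i) fun x hx => (hO_sub i hx).1
  have hbR : ∀ i, b i ≤ R := fun i => csSup_le (hO_ne i) fun x hx => (hO_sub i hx).2
  have hab : ∀ i, a i ≤ b i := fun i => csInf_le_csSup (hO_ne i) (hObdd_below i) (hObdd_above i)
  have hO_Icc : ∀ i, O i ⊆ Set.Icc (a i) (b i) :=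
    fun i x hx => ⟨csInf_le (hObdd_below i) hx, le_csSup (hObdd_above i) hx⟩
  have hIoo_O : ∀ i, Set.Ioo (a i) (b i) ⊆ O i := by
    intro i z hz
    obtain ⟨x, hxO, hxz⟩ := exists_lt_of_csInf_lt (hO_ne i) hz.1
    obtain ⟨y, hyO, hzy⟩ := exists_lt_of_lt_csSup (hO_ne i) hz.2
    exact (hO_conv i).ordConnected.out hxO hyO ⟨hxz.le, hzy.le⟩
  have hba_le : ∀ i, b i - a i ≤ l i := by
    intro i
    have h1 : ENNReal.ofReal (b i - a i) ≤ ENNReal.ofReal (l i) := by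
      calc ENNReal.ofReal (b i - a i) = volume (Set.Ioo (a i) (b i)) := (Real.volume_Ioo).symm
        _ ≤ volume (O i) := measure_mono (hIoo_O i)
        _ ≤ _ := hl_ge i
    exact (ENNReal.ofReal_le_ofReal_iff (hl_pos i).le).mp h1
  have hba_lt : ∀ i, b i - a i < m i := fun i => (hba_le i).trans_lt (hl_lt_m i)
  -- inflated intervals
  set η : I → ℝ := fun i => (m i - (b i - a i)) / 4 with hη_def
  have hη_pos : ∀ i, 0 < η i := by
    intro i
    have := hba_lt i
    simp only [hη_def]
    linarith
  set α : I → ℝ := fun i => a i - η i with hα_def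
  set β : I → ℝ := fun i => b i + η i with hβ_def
  set w : I → ℝ := fun i => b i - a i + 2 * η i with hw_def
  have hw_pos : ∀ i, 0 < w i := by
    intro i
    have h1 := hab i
    have h2 := hη_pos i
    simp only [hw_def]
    linarith
  have hw_lt_m : ∀ i, w i < m i := by
    intro i
    have h1 := hba_lt i
    simp only [hw_def, hη_def]
    linarith
  have hβα : ∀ i, β i - α i = w i := by
    intro i
    simp only [hα_def, hβ_def, hw_def]
    ring
  have hαa : ∀ i, α i < a i := by
    intro i; have := hη_pos i; simp only [hα_def]; linarith
  have hbβ : ∀ i, b i < β i := by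
    intro i; have := hη_pos i; simp only [hβ_def]; linarith
  have hη_lt_m : ∀ i, η i < m i := by
    intro i
    have h1 := hab i
    have h2 := hm_pos i
    have h3 := hba_le i
    simp only [hη_def]
    linarith
  have hα_lb : ∀ i, -R < α i := by
    intro i
    have h1 := ha0 i
    have h2 := hη_lt_m i
    have h3 := hm_le_T i
    simp only [hα_def]
    linarith [hT_lt_R]
  have hβ_ub : ∀ i, β i < 2 * R := by
    intro i
    have h1 := hbR i
    have h2 := hη_lt_m i
    have h3 := hm_le_T i
    simp only [hβ_def]
    linarith [hT_lt_R]
  -- ramp functions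
  set ramp : I → ℝ → ℝ := fun i x => min 1 (max 0 ((x - α i) / w i)) with hramp_def
  have hramp_nonneg : ∀ i x, 0 ≤ ramp i x := fun i x => by
    simp only [hramp_def]; exact le_min zero_le_one (le_max_left _ _)
  have hramp_le_one : ∀ i x, ramp i x ≤ 1 := fun i x => by
    simp only [hramp_def]; exact min_le_left _ _
  have hramp_mono : ∀ i, Monotone (ramp i) := by
    intro i x y hxy
    simp only [hramp_def]
    have h : (x - α i) / w i ≤ (y - α i) / w i := by
      gcongr
      exact (hw_pos i).le
    exact min_le_min le_rfl (max_le_max le_rfl h)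
  have hramp_zero : ∀ i x, x ≤ α i → ramp i x = 0 := by
    intro i x hx
    simp only [hramp_def]
    have h : (x - α i) / w i ≤ 0 :=
      div_nonpos_of_nonpos_of_nonneg (by linarith) (hw_pos i).le
    rw [max_eq_left h, min_eq_right zero_le_one]
  have hramp_one : ∀ i x, β i ≤ x → ramp i x = 1 := by
    intro i x hx
    simp only [hramp_def]
    have h : 1 ≤ (x - α i) / w i := by
      rw [le_div_iff₀ (hw_pos i)]
      have := hβα i
      linarith
    exact min_eq_left (h.trans (le_max_right 0 _))
  have hramp_lin : ∀ i x, α i ≤ x → x ≤ β i → ramp i x = (x - α i) / w i := by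
    intro i x h1 h2
    simp only [hramp_def]
    have h0 : 0 ≤ (x - α i) / w i := div_nonneg (by linarith) (hw_pos i).le
    have hle : (x - α i) / w i ≤ 1 := by
      rw [div_le_one (hw_pos i)]
      have := hβα i
      linarith
    rw [max_eq_right h0, min_eq_right hle]
  have hramp_cont : ∀ i, Continuous (ramp i) := by
    intro i
    simp only [hramp_def]
    exact continuous_const.min
      (continuous_const.max ((continuous_id.sub continuous_const).div_const _))
  -- the function S and F
  have hS_summ : ∀ x, Summable fun i => m i * ramp i x := by
    intro x
    refine Summable.of_nonneg_of_le
      (fun i => mul_nonneg (hm_pos i).le (hramp_nonneg i x)) (fun i => ?_) hm_sum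
    calc m i * ramp i x ≤ m i * 1 :=
          mul_le_mul_of_nonneg_left (hramp_le_one i x) (hm_pos i).le
      _ = m i := mul_one _
  set S : ℝ → ℝ := fun x => ∑' i, m i * ramp i x with hS_def
  have hS_cont : Continuous S := by
    refine continuous_tsum (fun i => continuous_const.mul (hramp_cont i)) hm_sum ?_
    intro i x
    rw [Real.norm_eq_abs, abs_of_nonneg (mul_nonneg (hm_pos i).le (hramp_nonneg i x))]
    calc m i * ramp i x ≤ m i * 1 :=
          mul_le_mul_of_nonneg_left (hramp_le_one i x) (hm_pos i).le
      _ = m i := mul_one _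
  set F : ℝ → ℝ := fun x => x - S x with hF_def
  have hF_cont : Continuous F := continuous_id.sub hS_cont
  have hS_diff : ∀ x y, S y - S x = ∑' i, m i * (ramp i y - ramp i x) := by
    intro x y
    simp only [hS_def]
    rw [← Summable.tsum_sub (hS_summ y) (hS_summ x)]
    exact tsum_congr fun i => by ring
  have hD_summ : ∀ x y, Summable fun i => m i * (ramp i y - ramp i x) := by
    intro x y
    have h := (hS_summ y).sub (hS_summ x)
    have h2 : (fun i => m i * ramp i y - m i * ramp i x)
        = fun i => m i * (ramp i y - ramp i x) := funext fun i => by ring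
    rwa [h2] at h
  have hterm_le : ∀ x y, x ≤ y → ∀ i, m i * (ramp i y - ramp i x) ≤ S y - S x := by
    intro x y hxy i
    rw [hS_diff x y]
    exact Summable.le_tsum (hD_summ x y) i fun j _ =>
      mul_nonneg (hm_pos j).le (sub_nonneg.mpr (hramp_mono j hxy))
  have hF_strict : ∀ i u v, α i ≤ u → u < v → v ≤ β i → F v < F u := by
    intro i u v hu huv hv
    have h1 : ramp i v - ramp i u = (v - u) / w i := by
      rw [hramp_lin i u hu (by linarith), hramp_lin i v (by linarith) hv]
      rw [div_sub_div_same]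
      ring_nf
    have h2 : m i * ((v - u) / w i) ≤ S v - S u := by
      have h := hterm_le u v huv.le i
      rwa [h1] at h
    have h3 : v - u < m i * ((v - u) / w i) := by
      rw [← mul_div_assoc, lt_div_iff₀ (hw_pos i)]
      nlinarith [mul_pos (sub_pos.mpr huv) (sub_pos.mpr (hw_lt_m i))]
    simp only [hF_def]
    linarith
  have hS_le_T : ∀ x, S x ≤ T := by
    intro x
    refine Summable.tsum_le_tsum (fun i => ?_) (hS_summ x) hm_sum
    calc m i * ramp i x ≤ m i * 1 :=
          mul_le_mul_of_nonneg_left (hramp_le_one i x) (hm_pos i).le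
      _ = m i := mul_one _
  have hS_nonneg : ∀ x, 0 ≤ S x :=
    fun x => tsum_nonneg fun i => mul_nonneg (hm_pos i).le (hramp_nonneg i x)
  have hF_low : ∀ x, x ≤ -R → F x = x := by
    intro x hx
    have hS0 : S x = 0 := by
      simp only [hS_def]
      have h : ∀ i, m i * ramp i x = 0 := fun i => by
        rw [hramp_zero i x (hx.trans (hα_lb i).le)]; ring
      rw [tsum_congr h, tsum_zero]
    simp only [hF_def]
    rw [hS0, sub_zero]
  have hF_high : ∀ x, 2 * R ≤ x → F x = x - T := by
    intro x hx
    have hST : S x = T := by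
      simp only [hS_def, hT_def]
      refine tsum_congr fun i => ?_
      rw [hramp_one i x ((hβ_ub i).le.trans hx), mul_one]
    simp only [hF_def]
    rw [hST]
  -- the shadow set E
  set E : Set ℝ := {x | ∃ y, x < y ∧ F y < F x} with hE_def
  have hE_open : IsOpen E := by
    have h : E = ⋃ y, (Set.Iio y ∩ F ⁻¹' (Set.Ioi (F y))) := by
      ext x
      simp only [hE_def, Set.mem_setOf_eq, Set.mem_iUnion, Set.mem_inter_iff, Set.mem_Iio,
        Set.mem_preimage, Set.mem_Ioi]
    rw [h]
    exact isOpen_iUnion fun y => isOpen_Iio.inter (isOpen_Ioi.preimage hF_cont)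
  have hE_ub : ∀ x, 2 * R ≤ x → x ∉ E := by
    rintro x hx ⟨y, hxy, hFy⟩
    have h1 : F x = x - T := hF_high x hx
    have h2 : F y = y - T := hF_high y (hx.trans hxy.le)
    rw [h1, h2] at hFy
    linarith
  have hE_lb : ∀ x, x ≤ -(2 * R) → x ∉ E := by
    rintro x hx ⟨y, hxy, hFy⟩
    have hxR : x ≤ -R := by linarith
    have h1 : F x = x := hF_low x hxR
    rcases le_or_gt y (-R) with hy | hy
    · rw [hF_low y hy, h1] at hFy
      linarith
    · have h2 : y - T ≤ F y := by
        have := hS_le_T y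
        simp only [hF_def]
        linarith
      rw [h1] at hFy
      linarith [hT_lt_R]
  have hsupp_E : ∀ i, Set.Ioo (α i) (β i) ⊆ E := by
    intro i z hz
    exact ⟨β i, hz.2, hF_strict i z (β i) hz.1.le hz.2 le_rfl⟩
  -- components of E around each inflated interval
  set p : I → ℝ := fun i => (α i + β i) / 2 with hp_def
  have hαβ : ∀ i, α i < β i := by
    intro i
    have h1 := hβα i
    have h2 := hw_pos i
    linarith
  have hp_mem : ∀ i, p i ∈ Set.Ioo (α i) (β i) := by
    intro i
    have h := hαβ i
    clear_value p α β
    constructor <;> (simp only [hp_def]; linarith)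
  have hpE : ∀ i, p i ∈ E := fun i => hsupp_E i (hp_mem i)
  have hp_lb : ∀ i, -(2 * R) < p i := by
    intro i
    have h1 := hα_lb i
    have h2 := (hp_mem i).1
    linarith
  have hp_ub : ∀ i, p i < 2 * R := by
    intro i
    have h1 := hβ_ub i
    have h2 := (hp_mem i).2
    linarith
  set c : I → ℝ := fun i => sSup (Eᶜ ∩ Set.Iio (p i)) with hc_def
  set d : I → ℝ := fun i => sInf (Eᶜ ∩ Set.Ioi (p i)) with hd_def
  have hcne : ∀ i, (Eᶜ ∩ Set.Iio (p i)).Nonempty :=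
    fun i => ⟨-(2 * R), hE_lb _ le_rfl, hp_lb i⟩
  have hcbdd : ∀ i, BddAbove (Eᶜ ∩ Set.Iio (p i)) := fun i => ⟨p i, fun z hz => hz.2.le⟩
  have hdne : ∀ i, (Eᶜ ∩ Set.Ioi (p i)).Nonempty :=
    fun i => ⟨2 * R, hE_ub _ le_rfl, hp_ub i⟩
  have hdbdd : ∀ i, BddBelow (Eᶜ ∩ Set.Ioi (p i)) := fun i => ⟨p i, fun z hz => hz.2.le⟩
  have hc_notE : ∀ i, c i ∉ E := by
    intro i
    have h1 : c i ∈ closure (Eᶜ ∩ Set.Iio (p i)) := csSup_mem_closure (hcne i) (hcbdd i)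
    have h2 : closure (Eᶜ ∩ Set.Iio (p i)) ⊆ Eᶜ :=
      (closure_mono Set.inter_subset_left).trans (hE_open.isClosed_compl.closure_eq).le
    exact h2 h1
  have hd_notE : ∀ i, d i ∉ E := by
    intro i
    have h1 : d i ∈ closure (Eᶜ ∩ Set.Ioi (p i)) := csInf_mem_closure (hdne i) (hdbdd i)
    have h2 : closure (Eᶜ ∩ Set.Ioi (p i)) ⊆ Eᶜ :=
      (closure_mono Set.inter_subset_left).trans (hE_open.isClosed_compl.closure_eq).le
    exact h2 h1
  have hc_lt_p : ∀ i, c i < p i := by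
    intro i
    refine lt_of_le_of_ne (csSup_le (hcne i) fun z hz => hz.2.le) (fun h => ?_)
    exact hc_notE i (h ▸ hpE i)
  have hp_lt_d : ∀ i, p i < d i := by
    intro i
    refine lt_of_le_of_ne (le_csInf (hdne i) fun z hz => hz.2.le) (fun h => ?_)
    exact hd_notE i (h ▸ hpE i)
  have hcd : ∀ i, c i < d i := fun i => (hc_lt_p i).trans (hp_lt_d i)
  have hIooE : ∀ i, Set.Ioo (c i) (d i) ⊆ E := by
    intro i z hz
    by_contra hzE
    rcases lt_trichotomy z (p i) with h | h | h
    · exact absurd (le_csSup (hcbdd i) ⟨hzE, h⟩) (not_le.mpr hz.1)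
    · exact hzE (h ▸ hpE i)
    · exact absurd (csInf_le (hdbdd i) ⟨hzE, h⟩) (not_le.mpr hz.2)
  have hc_le_α : ∀ i, c i ≤ α i := by
    intro i
    by_contra h
    push_neg at h
    exact hc_notE i (hsupp_E i ⟨h, (hc_lt_p i).trans (hp_mem i).2⟩)
  have hβ_le_d : ∀ i, β i ≤ d i := by
    intro i
    by_contra h
    push_neg at h
    exact hd_notE i (hsupp_E i ⟨(hp_mem i).1.trans (hp_lt_d i), h⟩)
  -- rising sun : F agrees at the endpoints of each component
  have hnotE_ge : ∀ x, x ∉ E → ∀ y, x < y → F x ≤ F y := by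
    intro x hx y hxy
    by_contra h
    push_neg at h
    exact hx ⟨y, hxy, h⟩
  have hFcd : ∀ i, F (c i) = F (d i) := fun i =>
    rising_sun hF_cont (hcd i) (hnotE_ge _ (hc_notE i)) (hnotE_ge _ (hd_notE i))
      (fun z hz => hIooE i hz)
  have hlen : ∀ i, d i - c i = ∑' i', m i' * (ramp i' (d i) - ramp i' (c i)) := by
    intro i
    have h := hFcd i
    simp only [hF_def] at h
    have h2 := hS_diff (c i) (d i)
    linarith
  -- the component map
  set g : I → ℝ × ℝ := fun i => (c i, d i) with hg_def
  have hcomp_eq : ∀ i i' z, z ∈ Set.Ioo (c i) (d i) → z ∈ Set.Ioo (c i') (d i') →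
      g i = g i' := by
    intro i i' z hz hz'
    have hcc : c i = c i' := by
      rcases lt_trichotomy (c i) (c i') with h | h | h
      · exact absurd (hIooE i ⟨h, hz'.1.trans hz.2⟩) (hc_notE i')
      · exact h
      · exact absurd (hIooE i' ⟨h, hz.1.trans hz'.2⟩) (hc_notE i)
    have hdd : d i = d i' := by
      rcases lt_trichotomy (d i) (d i') with h | h | h
      · exact absurd (hIooE i' ⟨hz'.1.trans hz.2, h⟩) (hd_notE i)
      · exact h
      · exact absurd (hIooE i ⟨hz.1.trans hz'.2, h⟩) (hd_notE i')
    simp only [hg_def, Prod.mk.injEq]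
    exact ⟨hcc, hdd⟩
  have horder : ∀ i i', g i ≠ g i' → d i ≤ c i' ∨ d i' ≤ c i := by
    intro i i' hne
    by_contra h
    push_neg at h
    obtain ⟨h1, h2⟩ := h
    have hMN : max (c i) (c i') < min (d i) (d i') := by
      rw [max_lt_iff, lt_min_iff, lt_min_iff]
      exact ⟨⟨hcd i, h2⟩, ⟨h1, hcd i'⟩⟩
    set z := (max (c i) (c i') + min (d i) (d i')) / 2 with hz_def
    have hMz : max (c i) (c i') < z := by simp only [hz_def]; linarith
    have hzN : z < min (d i) (d i') := by simp only [hz_def]; linarith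
    have hz1 : z ∈ Set.Ioo (c i) (d i) :=
      ⟨(le_max_left _ _).trans_lt hMz, hzN.trans_le (min_le_left _ _)⟩
    have hz2 : z ∈ Set.Ioo (c i') (d i') :=
      ⟨(le_max_right _ _).trans_lt hMz, hzN.trans_le (min_le_right _ _)⟩
    exact hne (hcomp_eq i i' z hz1 hz2)
  have hterm : ∀ i i', m i' * (ramp i' (d i) - ramp i' (c i))
      = Set.indicator {k | g k = g i} m i' := by
    intro i i'
    by_cases h : g i' = g i
    · rw [Set.indicator_of_mem (show i' ∈ {k | g k = g i} from h)]
      have hcc : c i' = c i ∧ d i' = d i := by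
        have := h
        simp only [hg_def, Prod.mk.injEq] at this
        exact this
      rw [hramp_one i' (d i) (by rw [← hcc.2]; exact hβ_le_d i'),
        hramp_zero i' (c i) (by rw [← hcc.1]; exact hc_le_α i')]
      ring
    · rw [Set.indicator_of_notMem (show i' ∉ {k | g k = g i} from h)]
      rcases horder i' i (fun he => h he) with hord | hord
      · -- d i' ≤ c i : the support of i' is entirely to the left
        rw [hramp_one i' (c i) ((hβ_le_d i').trans hord),
          hramp_one i' (d i) (((hβ_le_d i').trans hord).trans (hcd i).le)]
        ring
      · -- d i ≤ c i' : the support of i' is entirely to the right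
        rw [hramp_zero i' (d i) (hord.trans (hc_le_α i')),
          hramp_zero i' (c i) ((hcd i).le.trans (hord.trans (hc_le_α i')))]
        ring
  have hlen2 : ∀ i, d i - c i = ∑' i', Set.indicator {k | g k = g i} m i' := by
    intro i
    rw [hlen i]
    exact tsum_congr (hterm i)
  -- final assembly
  refine ⟨↥(Set.range g), fun j => Set.Ioo j.1.1 j.1.2,
    fun i => ⟨g i, Set.mem_range_self i⟩, ?_, ?_, ?_, ?_, ?_⟩
  · exact Set.Countable.to_subtype (Set.countable_range g)
  · rintro ⟨⟨u, v⟩, i, hi⟩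
    refine ⟨u, v, ?_, rfl⟩
    have huv : c i = u ∧ d i = v := by
      simp only [hg_def, Prod.mk.injEq] at hi
      exact hi
    rw [← huv.1, ← huv.2]
    exact hcd i
  · rintro ⟨⟨u, v⟩, i, hi⟩ ⟨⟨u', v'⟩, i', hi'⟩ hne
    have hgg : g i ≠ g i' := by
      intro h
      apply hne
      apply Subtype.ext
      show (u, v) = (u', v')
      rw [← hi, ← hi', h]
    obtain ⟨h1, h2⟩ : c i = u ∧ d i = v := by
      simp only [hg_def, Prod.mk.injEq] at hi; exact hi
    obtain ⟨h1', h2'⟩ : c i' = u' ∧ d i' = v' := by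
      simp only [hg_def, Prod.mk.injEq] at hi'; exact hi'
    show Disjoint (Set.Ioo u v) (Set.Ioo u' v')
    rw [← h1, ← h2, ← h1', ← h2']
    rw [Set.disjoint_left]
    intro z hz hz'
    exact hgg (hcomp_eq i i' z hz hz')
  · intro i x hx
    have hx' := hO_Icc i hx
    exact ⟨(hc_le_α i).trans_lt ((hαa i).trans_le hx'.1),
      (hx'.2.trans_lt (hbβ i)).trans_le (hβ_le_d i)⟩
  · intro j
    obtain ⟨i₀, hi₀⟩ := j.2
    have hj1 : j.1 = (c i₀, d i₀) := by rw [← hi₀, hg_def]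
    have hiff : ∀ i, (fun i => (⟨g i, Set.mem_range_self i⟩ : ↥(Set.range g))) i = j
        ↔ g i = g i₀ := by
      intro i
      rw [Subtype.ext_iff]
      show g i = j.1 ↔ g i = g i₀
      have hgi0 : g i₀ = (c i₀, d i₀) := by rw [hi₀]; exact hj1
      rw [hj1, hgi0]
    have key : ENNReal.ofReal (d i₀ - c i₀)
        = ∑' i : {k : I // g k = g i₀}, ENNReal.ofReal (m i.1) := by
      rw [hlen2 i₀, ENNReal.ofReal_tsum_of_nonneg
        (fun i' => Set.indicator_nonneg (fun k _ => (hm_pos k).le) i')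
        (hm_sum.indicator _)]
      calc ∑' i', ENNReal.ofReal (Set.indicator {k | g k = g i₀} m i')
          = ∑' i', Set.indicator {k | g k = g i₀} (fun k => ENNReal.ofReal (m k)) i' := by
            refine tsum_congr fun i' => ?_
            by_cases h : i' ∈ {k | g k = g i₀}
            · rw [Set.indicator_of_mem h, Set.indicator_of_mem h]
            · rw [Set.indicator_of_notMem h, Set.indicator_of_notMem h, ENNReal.ofReal_zero]
        _ = ∑' i : {k : I // g k = g i₀}, ENNReal.ofReal (m i.1) :=
            (tsum_subtype {k : I | g k = g i₀} (fun k => ENNReal.ofReal (m k))).symm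
    calc volume (Set.Ioo j.1.1 j.1.2) = ENNReal.ofReal (d i₀ - c i₀) := by
          rw [hj1]; exact Real.volume_Ioo
      _ = ∑' i : {k : I // g k = g i₀}, ENNReal.ofReal (m i.1) := key
      _ = ∑' i : {i : I // (fun i => (⟨g i, Set.mem_range_self i⟩ : ↥(Set.range g))) i = j},
            ENNReal.ofReal (l i.1 / Real.sqrt ε) := by
          simp only [hm_def]
          exact (Equiv.tsum_eq (Equiv.subtypeEquivRight hiff)
            (fun i : {k : I // g k = g i₀} => ENNReal.ofReal (l i.1 / Real.sqrt ε))).symm
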